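/- Let S = {a₁,a₂} × {b₁,b₂} be the 2×2 rectangular band and F a field. The map φ: J ↦ ϱ_J (where s ϱ_J t iff s − t ∈ J) from ideals of F[S] to congruences of S satisfies: φ({0}) = φ(J_L ∩ J_R) = identity congruence, φ(J_L) = α_L, φ(J_R) = α_R, φ(F[ω_S]) = φ(F[S]) = universal congruence, and φ(J₁ + J₂) = φ(J₁) ∨ φ(J₂) for all ideals J₁, J₂. -/

import Mathlib

inductive L2 : Type | a1 | a2
deriving DecidableEq

instance : Fintype L2 := ⟨{L2.a1, L2.a2}, fun x => by cases x <;> simp⟩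

instance : Semigroup L2 where
  mul x _ := x
  mul_assoc _ _ _ := rfl

inductive R2 : Type | b1 | b2
deriving DecidableEq

instance : Fintype R2 := ⟨{R2.b1, R2.b2}, fun x => by cases x <;> simp⟩

instance : Semigroup R2 where
  mul _ y := y
  mul_assoc _ _ _ := rfl

abbrev RB : Type := L2 × R2

def IsTwoSidedIdeal {F A : Type*} [Field F] [NonUnitalNonAssocSemiring A]
    [Module F A] (J : Submodule F A) : Prop :=
  ∀ a x : A, x ∈ J → a * x ∈ J ∧ x * a ∈ J

variable (F : Type*) [Field F]

/-- The sum-of-coefficients (augmentation) linear map on `F[S]`. -/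
noncomputable def coeffSum : MonoidAlgebra F RB →ₗ[F] F where
  toFun x := ∑ s : RB, x.coeff s
  map_add' x y := by
    simp only [show ∀ s, (x + y).coeff s = x.coeff s + y.coeff s from fun _ => rfl, Finset.sum_add_distrib]
  map_smul' c x := by
    simp only [show ∀ s, (c • x).coeff s = c * x.coeff s from fun _ => rfl, Finset.mul_sum,
      RingHom.id_apply, smul_eq_mul]

/-- `J_L`: the kernel of the map `F[S] → F[L]` induced by the projection. -/
noncomputable def JL : Submodule F (MonoidAlgebra F RB) :=
  LinearMap.ker ((Finsupp.lmapDomain F F (Prod.fst : RB → L2)) ∘ₗ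
    (MonoidAlgebra.coeffLinearEquiv F).toLinearMap)

/-- `J_R`: the kernel of the map `F[S] → F[R]` induced by the projection. -/
noncomputable def JR : Submodule F (MonoidAlgebra F RB) :=
  LinearMap.ker ((Finsupp.lmapDomain F F (Prod.snd : RB → R2)) ∘ₗ
    (MonoidAlgebra.coeffLinearEquiv F).toLinearMap)

/-- The element `C = (a₁,b₁) − (a₁,b₂) − (a₂,b₁) + (a₂,b₂)`. -/
noncomputable def Celt : MonoidAlgebra F RB :=
  MonoidAlgebra.single (L2.a1, R2.b1) 1 - MonoidAlgebra.single (L2.a1, R2.b2) 1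
    - MonoidAlgebra.single (L2.a2, R2.b1) 1 + MonoidAlgebra.single (L2.a2, R2.b2) 1

/-- `ϱ_J`: the restriction to `S` of the congruence on `F[S]` induced by `J`. -/
def rho (J : Submodule F (MonoidAlgebra F RB)) : RB → RB → Prop :=
  fun s t => MonoidAlgebra.single s (1 : F) - MonoidAlgebra.single t (1 : F) ∈ J


/-! ### Auxiliary machinery -/

/-- `e s` is the basis element of `F[S]` at `s`. -/
noncomputable def e (s : RB) : MonoidAlgebra F RB := MonoidAlgebra.single s 1

lemma e_mul_e (s t : RB) : e F s * e F t = e F (s.1, t.2) := by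
  simp [e, MonoidAlgebra.single_mul_single]
  rfl

lemma l2_sum {M : Type*} [AddCommMonoid M] (f : L2 → M) : ∑ a, f a = f L2.a1 + f L2.a2 := by
  rw [show (Finset.univ : Finset L2) = {L2.a1, L2.a2} by decide]
  rw [Finset.sum_pair (by decide)]

lemma r2_sum {M : Type*} [AddCommMonoid M] (f : R2 → M) : ∑ a, f a = f R2.b1 + f R2.b2 := by
  rw [show (Finset.univ : Finset R2) = {R2.b1, R2.b2} by decide]
  rw [Finset.sum_pair (by decide)]

lemma ma_add_apply (x y : MonoidAlgebra F RB) (s : RB) : (x + y).coeff s = x.coeff s + y.coeff s := rfl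
lemma ma_smul_apply (c : F) (x : MonoidAlgebra F RB) (s : RB) : (c • x).coeff s = c * x.coeff s := rfl
lemma ma_sub_apply (x y : MonoidAlgebra F RB) (s : RB) : (x - y).coeff s = x.coeff s - y.coeff s := rfl

lemma decomp (x : MonoidAlgebra F RB) :
    x = x.coeff (L2.a1,R2.b1) • e F (L2.a1,R2.b1) + x.coeff (L2.a1,R2.b2) • e F (L2.a1,R2.b2)
      + x.coeff (L2.a2,R2.b1) • e F (L2.a2,R2.b1) + x.coeff (L2.a2,R2.b2) • e F (L2.a2,R2.b2) := by
  ext ⟨a,b⟩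
  cases a <;> cases b <;>
    simp [e, ma_add_apply, ma_smul_apply, MonoidAlgebra.single_apply]

lemma coeffSum_eq (x : MonoidAlgebra F RB) :
    coeffSum F x = x.coeff (L2.a1,R2.b1) + x.coeff (L2.a1,R2.b2) + x.coeff (L2.a2,R2.b1) + x.coeff (L2.a2,R2.b2) := by
  show ∑ s : RB, x.coeff s = _
  rw [Fintype.sum_prod_type, l2_sum, r2_sum, r2_sum]; ring

lemma coeffSum_single (p : RB) (c : F) : coeffSum F (MonoidAlgebra.single p c) = c := by
  rw [coeffSum_eq]
  rcases p with ⟨a,b⟩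
  cases a <;> cases b <;> simp [MonoidAlgebra.single_apply]

lemma e_mul (s : RB) (x : MonoidAlgebra F RB) :
    e F s * x = (x.coeff (L2.a1,R2.b1) + x.coeff (L2.a2,R2.b1)) • e F (s.1, R2.b1)
      + (x.coeff (L2.a1,R2.b2) + x.coeff (L2.a2,R2.b2)) • e F (s.1, R2.b2) := by
  conv_lhs => rw [decomp F x]
  simp only [mul_add, mul_smul_comm, e_mul_e]
  module

lemma mul_e (t : RB) (x : MonoidAlgebra F RB) :
    x * e F t = (x.coeff (L2.a1,R2.b1) + x.coeff (L2.a1,R2.b2)) • e F (L2.a1, t.2)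
      + (x.coeff (L2.a2,R2.b1) + x.coeff (L2.a2,R2.b2)) • e F (L2.a2, t.2) := by
  conv_lhs => rw [decomp F x]
  simp only [add_mul, smul_mul_assoc, e_mul_e]
  module

lemma snd_map (x : MonoidAlgebra F RB) :
    Finsupp.lmapDomain F F (Prod.snd : RB → R2) x.coeff
      = Finsupp.single R2.b1 (x.coeff (L2.a1,R2.b1) + x.coeff (L2.a2,R2.b1))
        + Finsupp.single R2.b2 (x.coeff (L2.a1,R2.b2) + x.coeff (L2.a2,R2.b2)) := by
  conv_lhs => rw [decomp F x]
  simp only [MonoidAlgebra.coeff_add, MonoidAlgebra.coeff_smul, MonoidAlgebra.coeff_single,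
    map_add, map_smul, Finsupp.lmapDomain_apply, e, Finsupp.mapDomain_single,
    Finsupp.smul_single, smul_eq_mul, mul_one, Finsupp.single_add]
  abel

lemma fst_map (x : MonoidAlgebra F RB) :
    Finsupp.lmapDomain F F (Prod.fst : RB → L2) x.coeff
      = Finsupp.single L2.a1 (x.coeff (L2.a1,R2.b1) + x.coeff (L2.a1,R2.b2))
        + Finsupp.single L2.a2 (x.coeff (L2.a2,R2.b1) + x.coeff (L2.a2,R2.b2)) := by
  conv_lhs => rw [decomp F x]
  simp only [MonoidAlgebra.coeff_add, MonoidAlgebra.coeff_smul, MonoidAlgebra.coeff_single,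
    map_add, map_smul, Finsupp.lmapDomain_apply, e, Finsupp.mapDomain_single,
    Finsupp.smul_single, smul_eq_mul, mul_one, Finsupp.single_add]
  abel

lemma single_pair_l2 (c1 c2 : F) :
    Finsupp.single L2.a1 c1 + Finsupp.single L2.a2 c2 = 0 ↔ c1 = 0 ∧ c2 = 0 := by
  constructor
  · intro h
    constructor
    · have h1 := congrArg (fun f : L2 →₀ F => f L2.a1) h
      simpa [Finsupp.single_apply] using h1
    · have h2 := congrArg (fun f : L2 →₀ F => f L2.a2) h
      simpa [Finsupp.single_apply] using h2
  · rintro ⟨rfl, rfl⟩; simp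

lemma single_pair_r2 (c1 c2 : F) :
    Finsupp.single R2.b1 c1 + Finsupp.single R2.b2 c2 = 0 ↔ c1 = 0 ∧ c2 = 0 := by
  constructor
  · intro h
    constructor
    · have h1 := congrArg (fun f : R2 →₀ F => f R2.b1) h
      simpa [Finsupp.single_apply] using h1
    · have h2 := congrArg (fun f : R2 →₀ F => f R2.b2) h
      simpa [Finsupp.single_apply] using h2
  · rintro ⟨rfl, rfl⟩; simp

lemma mem_JL_iff (x : MonoidAlgebra F RB) :
    x ∈ JL F ↔ x.coeff (L2.a1,R2.b1) + x.coeff (L2.a1,R2.b2) = 0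
      ∧ x.coeff (L2.a2,R2.b1) + x.coeff (L2.a2,R2.b2) = 0 := by
  have h := fst_map F x
  constructor
  · intro hx
    have hx0 : Finsupp.lmapDomain F F (Prod.fst : RB → L2) x.coeff = 0 := hx
    rw [h] at hx0
    exact (single_pair_l2 F _ _).mp hx0
  · intro hc
    show Finsupp.lmapDomain F F (Prod.fst : RB → L2) x.coeff = 0
    rw [h]
    exact (single_pair_l2 F _ _).mpr hc

lemma mem_JR_iff (x : MonoidAlgebra F RB) :
    x ∈ JR F ↔ x.coeff (L2.a1,R2.b1) + x.coeff (L2.a2,R2.b1) = 0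
      ∧ x.coeff (L2.a1,R2.b2) + x.coeff (L2.a2,R2.b2) = 0 := by
  have h := snd_map F x
  constructor
  · intro hx
    have hx0 : Finsupp.lmapDomain F F (Prod.snd : RB → R2) x.coeff = 0 := hx
    rw [h] at hx0
    exact (single_pair_r2 F _ _).mp hx0
  · intro hc
    show Finsupp.lmapDomain F F (Prod.snd : RB → R2) x.coeff = 0
    rw [h]
    exact (single_pair_r2 F _ _).mpr hc

lemma rho_JL (s t : RB) : rho F (JL F) s t ↔ s.1 = t.1 := by
  show MonoidAlgebra.single s (1:F) - MonoidAlgebra.single t 1 ∈ JL F ↔ _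
  rw [mem_JL_iff]
  rcases s with ⟨sa,sb⟩; rcases t with ⟨ta,tb⟩
  cases sa <;> cases ta <;> cases sb <;> cases tb <;>
    simp [ma_sub_apply, MonoidAlgebra.single_apply]

lemma rho_JR (s t : RB) : rho F (JR F) s t ↔ s.2 = t.2 := by
  show MonoidAlgebra.single s (1:F) - MonoidAlgebra.single t 1 ∈ JR F ↔ _
  rw [mem_JR_iff]
  rcases s with ⟨sa,sb⟩; rcases t with ⟨ta,tb⟩
  cases sa <;> cases ta <;> cases sb <;> cases tb <;>
    simp [ma_sub_apply, MonoidAlgebra.single_apply]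

lemma eB1 {J : Submodule F (MonoidAlgebra F RB)} (hJ : IsTwoSidedIdeal J)
    {x : MonoidAlgebra F RB} (hx : x ∈ J) (hc : coeffSum F x ≠ 0) (s t : RB) :
    e F s - e F t ∈ J := by
  have key : ∀ s : RB, e F s ∈ J := by
    intro s
    have h1 : e F s * x * e F s ∈ J := (hJ (e F s) _ (hJ (e F s) x hx).1).2
    have h2 : e F s * x * e F s = coeffSum F x • e F s := by
      rw [e_mul, add_mul, smul_mul_assoc, smul_mul_assoc, e_mul_e, e_mul_e, coeffSum_eq]
      show _ • e F (s.1, s.2) + _ • e F (s.1, s.2) = _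
      rw [show ((s.1, s.2) : RB) = s from rfl]
      module
    rw [h2] at h1
    have h3 := J.smul_mem (coeffSum F x)⁻¹ h1
    rwa [smul_smul, inv_mul_cancel₀ hc, one_smul] at h3
  exact sub_mem (key s) (key t)

lemma eB2 {J : Submodule F (MonoidAlgebra F RB)} (hJ : IsTwoSidedIdeal J)
    {x : MonoidAlgebra F RB} (hx : x ∈ J) (hc : coeffSum F x = 0)
    (hm : x ∉ JR F) (a : L2) (b b' : R2) :
    e F (a, b) - e F (a, b') ∈ J := by
  set c := x.coeff (L2.a1,R2.b1) + x.coeff (L2.a2,R2.b1) with hcdef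
  have hsum : x.coeff (L2.a1,R2.b2) + x.coeff (L2.a2,R2.b2) = -c := by
    rw [coeffSum_eq] at hc; rw [hcdef]; linear_combination hc
  have hc0 : c ≠ 0 := by
    intro h
    exact hm ((mem_JR_iff F x).mpr ⟨by rw [← hcdef, h], by rw [hsum, h, neg_zero]⟩)
  have key : e F (a, R2.b1) - e F (a, R2.b2) ∈ J := by
    have h1 : e F (a, R2.b1) * x ∈ J := (hJ _ x hx).1
    have h2 : e F (a, R2.b1) * x = c • (e F (a, R2.b1) - e F (a, R2.b2)) := by
      rw [e_mul, ← hcdef, hsum]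
      show c • e F (a, R2.b1) + (-c) • e F (a, R2.b2) = _
      module
    rw [h2] at h1
    have h3 := J.smul_mem c⁻¹ h1
    rwa [smul_smul, inv_mul_cancel₀ hc0, one_smul] at h3
  cases b <;> cases b'
  · simpa using J.zero_mem
  · exact key
  · have := neg_mem key; rwa [neg_sub] at this
  · simpa using J.zero_mem

lemma eB3 {J : Submodule F (MonoidAlgebra F RB)} (hJ : IsTwoSidedIdeal J)
    {x : MonoidAlgebra F RB} (hx : x ∈ J) (hc : coeffSum F x = 0)
    (hm : x ∉ JL F) (a a' : L2) (b : R2) :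
    e F (a, b) - e F (a', b) ∈ J := by
  set c := x.coeff (L2.a1,R2.b1) + x.coeff (L2.a1,R2.b2) with hcdef
  have hsum : x.coeff (L2.a2,R2.b1) + x.coeff (L2.a2,R2.b2) = -c := by
    rw [coeffSum_eq] at hc; rw [hcdef]; linear_combination hc
  have hc0 : c ≠ 0 := by
    intro h
    exact hm ((mem_JL_iff F x).mpr ⟨by rw [← hcdef, h], by rw [hsum, h, neg_zero]⟩)
  have key : e F (L2.a1, b) - e F (L2.a2, b) ∈ J := by
    have h1 : x * e F (L2.a1, b) ∈ J := (hJ _ x hx).2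
    have h2 : x * e F (L2.a1, b) = c • (e F (L2.a1, b) - e F (L2.a2, b)) := by
      rw [mul_e, ← hcdef, hsum]
      show c • e F (L2.a1, b) + (-c) • e F (L2.a2, b) = _
      module
    rw [h2] at h1
    have h3 := J.smul_mem c⁻¹ h1
    rwa [smul_smul, inv_mul_cancel₀ hc0, one_smul] at h3
  cases a <;> cases a'
  · simpa using J.zero_mem
  · exact key
  · have := neg_mem key; rwa [neg_sub] at this
  · simpa using J.zero_mem

lemma sup_isIdeal {J₁ J₂ : Submodule F (MonoidAlgebra F RB)}
    (h1 : IsTwoSidedIdeal J₁) (h2 : IsTwoSidedIdeal J₂) : IsTwoSidedIdeal (J₁ ⊔ J₂) := by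
  intro a x hx
  obtain ⟨y, hy, z, hz, rfl⟩ := Submodule.mem_sup.mp hx
  constructor
  · rw [mul_add]
    exact Submodule.add_mem_sup (h1 a y hy).1 (h2 a z hz).1
  · rw [add_mul]
    exact Submodule.add_mem_sup (h1 a y hy).2 (h2 a z hz).2

/-- `ϱ_J` is a congruence on `S` when `J` is a two-sided ideal. -/
def rhoCon (J : Submodule F (MonoidAlgebra F RB)) (hJ : IsTwoSidedIdeal J) : Con RB where
  r := rho F J
  iseqv := by
    constructor
    · intro s; show e F s - e F s ∈ J; rw [sub_self]; exact J.zero_mem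
    · intro s t h; show e F t - e F s ∈ J; rw [← neg_sub]; exact neg_mem h
    · intro s t u h1 h2
      show e F s - e F u ∈ J
      have h3 := add_mem (h1 : e F s - e F t ∈ J) (h2 : e F t - e F u ∈ J)
      rwa [sub_add_sub_cancel] at h3
  mul' := by
    intro w x y z h1 h2
    show e F (w * y) - e F (x * z) ∈ J
    have e1 : e F (w * y) = e F w * e F y := (e_mul_e F w y).symm
    have e2 : e F (x * z) = e F x * e F z := (e_mul_e F x z).symm
    rw [e1, e2, show e F w * e F y - e F x * e F z
        = e F w * (e F y - e F z) + (e F w - e F x) * e F z by rw [mul_sub, sub_mul]; abel]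
    exact add_mem (hJ (e F w) _ (h2 : e F y - e F z ∈ J)).1
      (hJ (e F z) _ (h1 : e F w - e F x ∈ J)).2

lemma conGen_of_rel {M : Type*} [Mul M] {r : M → M → Prop} {x y : M} (h : r x y) :
    conGen r x y := ConGen.Rel.of x y h

/-- For the 2x2 rectangular band `S`: the map `φ : J ↦ ϱ_J` sends `{0}` and
`J_L ∩ J_R` to the identity congruence, `J_L` to `α_L`, `J_R` to `α_R`, and both
the augmentation ideal `F[ω_S]` and `F[S]` to the universal congruence; moreover
`φ(J₁ + J₂) = φ(J₁) ∨ φ(J₂)` for all ideals `J₁, J₂` (the join being taken in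
the congruence lattice of `S`). -/
theorem rectangularBand_rho_join_hom :
    (∀ s t : RB, rho F ⊥ s t ↔ s = t) ∧
    (∀ s t : RB, rho F (JL F ⊓ JR F) s t ↔ s = t) ∧
    (∀ s t : RB, rho F (JL F) s t ↔ s.1 = t.1) ∧
    (∀ s t : RB, rho F (JR F) s t ↔ s.2 = t.2) ∧
    (∀ s t : RB, rho F (LinearMap.ker (coeffSum F)) s t) ∧
    (∀ s t : RB, rho F (⊤ : Submodule F (MonoidAlgebra F RB)) s t) ∧
    (∀ J₁ J₂ : Submodule F (MonoidAlgebra F RB),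
      IsTwoSidedIdeal J₁ → IsTwoSidedIdeal J₂ →
        ∀ s t : RB, rho F (J₁ ⊔ J₂) s t ↔
          conGen (fun x y => rho F J₁ x y ∨ rho F J₂ x y) s t) := by
  have part3 : ∀ s t : RB, rho F (JL F) s t ↔ s.1 = t.1 := rho_JL F
  have part4 : ∀ s t : RB, rho F (JR F) s t ↔ s.2 = t.2 := rho_JR F
  refine ⟨?_, ?_, part3, part4, ?_, ?_, ?_⟩
  · -- bot
    intro s t
    constructor
    · intro h
      have h0 : MonoidAlgebra.single s (1:F) - MonoidAlgebra.single t 1 = 0 := by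
        exact (Submodule.mem_bot F).mp h
      rw [sub_eq_zero] at h0
      exact (MonoidAlgebra.single_left_inj one_ne_zero).mp h0
    · rintro rfl
      show MonoidAlgebra.single s (1:F) - MonoidAlgebra.single s 1 ∈ (⊥ : Submodule F _)
      simp
  · -- inf
    intro s t
    constructor
    · intro h
      have hm := Submodule.mem_inf.mp (h : _ ∈ JL F ⊓ JR F)
      exact Prod.ext ((part3 s t).mp hm.1) ((part4 s t).mp hm.2)
    · rintro rfl
      exact Submodule.mem_inf.mpr ⟨(part3 s s).mpr rfl, (part4 s s).mpr rfl⟩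
  · -- ker coeffSum
    intro s t
    show MonoidAlgebra.single s (1:F) - MonoidAlgebra.single t 1 ∈ LinearMap.ker (coeffSum F)
    rw [LinearMap.mem_ker, map_sub, coeffSum_single, coeffSum_single, sub_self]
  · -- top
    intro s t
    exact Submodule.mem_top
  · -- join
    intro J₁ J₂ h1 h2 s t
    constructor
    · intro hst
      obtain ⟨u, hu, v, hv, huv⟩ := Submodule.mem_sup.mp (hst : _ ∈ J₁ ⊔ J₂)
      set r : RB → RB → Prop := fun x y => rho F J₁ x y ∨ rho F J₂ x y with hr
      by_cases hcu : coeffSum F u = 0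
      swap
      · exact conGen_of_rel (Or.inl (eB1 F h1 hu hcu s t))
      by_cases hcv : coeffSum F v = 0
      swap
      · exact conGen_of_rel (Or.inr (eB1 F h2 hv hcv s t))
      have hcol : ∀ b : R2, conGen r (s.1, b) (t.1, b) := by
        intro b
        by_cases hst1 : s.1 = t.1
        · rw [hst1]
          exact (conGen r).refl _
        · have hd : MonoidAlgebra.single s (1:F) - MonoidAlgebra.single t 1 ∉ JL F :=
            fun hh => hst1 ((rho_JL F s t).mp hh)
          rw [← huv] at hd
          by_cases hfu : u ∈ JL F
          · have hfv : v ∉ JL F := fun hv' => hd (add_mem hfu hv')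
            exact conGen_of_rel (Or.inr (eB3 F h2 hv hcv hfv s.1 t.1 b))
          · exact conGen_of_rel (Or.inl (eB3 F h1 hu hcu hfu s.1 t.1 b))
      have hrow : ∀ a : L2, conGen r (a, s.2) (a, t.2) := by
        intro a
        by_cases hst2 : s.2 = t.2
        · rw [hst2]
          exact (conGen r).refl _
        · have hd : MonoidAlgebra.single s (1:F) - MonoidAlgebra.single t 1 ∉ JR F :=
            fun hh => hst2 ((rho_JR F s t).mp hh)
          rw [← huv] at hd
          by_cases hfu : u ∈ JR F
          · have hfv : v ∉ JR F := fun hv' => hd (add_mem hfu hv')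
            exact conGen_of_rel (Or.inr (eB2 F h2 hv hcv hfv a s.2 t.2))
          · exact conGen_of_rel (Or.inl (eB2 F h1 hu hcu hfu a s.2 t.2))
      exact (conGen r).trans (hcol s.2) (hrow t.1)
    · intro hg
      have hle : conGen (fun x y => rho F J₁ x y ∨ rho F J₂ x y)
          ≤ rhoCon F (J₁ ⊔ J₂) (sup_isIdeal F h1 h2) := by
        apply Con.conGen_le.mpr
        rintro x y (hx | hx)
        · exact Submodule.mem_sup_left hx
        · exact Submodule.mem_sup_right hx
      exact hle hg
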